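/- Let J ≥ 1 be an integer and δ > 0. Let f, g : ℝ → ℝ be differentiable functions such that f′(x) ≥ 0 and g′(x) ≥ f′(x) + δ for all x ≥ 1, and g(1) ≥ f(1). For each natural number K ≥ 1, define h(K) = ∑ (k₁,…,k_J) ∈ M_K of (∑_{j=1}^J 2^{f(k_j)}) / (∑_{j=1}^J 2^{g(k_j)}), where M_K = {(k₁,…,k_J) : each k_j is a positive integer and max_j 2^{k_j} ≥ 2^K} and the sum is taken in the extended nonnegative reals. Then h(K) → 0 as K → ∞. -/

import Mathlib

open MeasureTheory Filter
open scoped ENNReal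

lemma rpow_finset_sum (x : ℝ≥0∞) (hx : x ≠ 0) (hx' : x ≠ ⊤) {ι : Type*} (s : Finset ι)
    (f : ι → ℝ) : x ^ (∑ i ∈ s, f i) = ∏ i ∈ s, x ^ f i := by
  classical
  induction s using Finset.cons_induction with
  | empty => simp
  | cons a s ha ih =>
    rw [Finset.sum_cons, Finset.prod_cons, ENNReal.rpow_add _ _ hx hx', ih]

lemma tsum_pi_prod (n : ℕ) (a : ℕ → ℝ≥0∞) :
    ∑' k : Fin n → ℕ, ∏ j, a (k j) = (∑' m, a m) ^ n := by
  induction n with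
  | zero =>
    simp only [Finset.univ_eq_empty, Finset.prod_empty, pow_zero]
    rw [tsum_eq_single (fun i : Fin 0 => 0) (fun b hb => absurd (funext fun i => i.elim0) hb)]
  | succ n ih =>
    rw [← (Fin.consEquiv fun _ : Fin (n+1) => ℕ).tsum_eq]
    simp only [Fin.consEquiv_apply]
    rw [ENNReal.tsum_prod']
    simp only [Fin.prod_univ_succ, Fin.cons_zero, Fin.cons_succ]
    rw [pow_succ]
    calc ∑' (m : ℕ) (k : Fin n → ℕ), a m * ∏ j, a (k j)
        = ∑' (m : ℕ), a m * ∑' k : Fin n → ℕ, ∏ j, a (k j) := by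
          congr 1; ext m; rw [ENNReal.tsum_mul_left]
      _ = (∑' m, a m) ^ n * ∑' m, a m := by
          rw [ih, ENNReal.tsum_mul_right, mul_comm]

/-- Lemma S3 of the paper: the multi-index tail sums of ratios of powers of two
vanish as `K → ∞`. -/
theorem tail_sum_ratio_tendsto_zero
    (J : ℕ) (hJ : 1 ≤ J) (δ : ℝ) (hδ : 0 < δ)
    (f g : ℝ → ℝ) (hf : Differentiable ℝ f) (hg : Differentiable ℝ g)
    (hf' : ∀ x : ℝ, 1 ≤ x → 0 ≤ deriv f x)
    (hg' : ∀ x : ℝ, 1 ≤ x → deriv f x + δ ≤ deriv g x)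
    (h1 : f 1 ≤ g 1) :
    Tendsto
      (fun K : ℕ =>
        ∑' k : Fin J → ℕ,
          if (∀ j, 1 ≤ k j) ∧ (∃ j, (2 : ℝ) ^ (K : ℝ) ≤ (2 : ℝ) ^ (k j : ℝ)) then
            (∑ j, (2 : ℝ≥0∞) ^ (f (k j : ℝ))) / (∑ j, (2 : ℝ≥0∞) ^ (g (k j : ℝ)))
          else 0)
      atTop (nhds 0) := by
  classical
  have h2t : (2 : ℝ≥0∞) ≠ ⊤ := ENNReal.ofNat_ne_top
  have h2z : (2 : ℝ≥0∞) ≠ 0 := two_ne_zero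
  have hJ0 : (0:ℝ) < J := by exact_mod_cast Nat.lt_of_lt_of_le Nat.zero_lt_one hJ
  set ε : ℝ := δ / (2 * J) with hεdef
  have hεpos : 0 < ε := by positivity
  have hεJ : ε * (J:ℝ) = δ / 2 := by
    rw [hεdef, div_mul_eq_mul_div, div_eq_iff (mul_pos two_pos hJ0).ne']
    ring
  -- monotonicity of f on [1,∞)
  have hfm : MonotoneOn f (Set.Ici 1) := by
    apply monotoneOn_of_deriv_nonneg (convex_Ici 1) hf.continuous.continuousOn
      hf.differentiableOn
    intro x hx
    rw [interior_Ici] at hx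
    exact hf' x hx.le
  -- the gap function
  set φ : ℝ → ℝ := fun x => g x - f x - δ * (x - 1) with hφdef
  have hφd : ∀ x : ℝ, HasDerivAt φ (deriv g x - (deriv f x + δ)) x := by
    intro x
    have hgx := (hg x).hasDerivAt
    have hfx := (hf x).hasDerivAt
    have hlin : HasDerivAt (fun x : ℝ => δ * (x - 1)) δ x := by
      simpa using (((hasDerivAt_id x).sub_const 1).const_mul δ)
    exact ((hgx.sub hfx).sub hlin).congr_deriv (by ring)
  have hφm : MonotoneOn φ (Set.Ici 1) := by
    apply monotoneOn_of_deriv_nonneg (convex_Ici 1)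
      (fun x _ => ((hφd x).continuousAt).continuousWithinAt)
      (fun x _ => ((hφd x).differentiableAt).differentiableWithinAt)
    intro x hx
    rw [interior_Ici] at hx
    rw [(hφd x).deriv]
    have := hg' x hx.le
    linarith
  have key : ∀ x : ℝ, 1 ≤ x → f x - g x ≤ -(δ * (x - 1)) := by
    intro x hx
    have h := hφm (Set.self_mem_Ici) (hx : x ∈ Set.Ici 1) hx
    simp only [hφdef, sub_self, mul_zero, sub_zero] at h
    linarith
  -- geometric data
  set a : ℕ → ℝ≥0∞ := fun m => (2:ℝ≥0∞) ^ (-(ε * ((m:ℝ) - 1))) with hadef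
  set C : ℝ≥0∞ := ∑' m, a m with hCdef
  have hgeom : ∀ (c : ℝ), 0 < c → (∑' m : ℕ, (2:ℝ≥0∞) ^ (-(c * ((m:ℝ) - 1)))) ≠ ⊤ := by
    intro c hc
    have hr : (2:ℝ≥0∞) ^ (-c) < 1 :=
      ENNReal.rpow_lt_one_of_one_lt_of_neg ENNReal.one_lt_two (by linarith)
    have hrw : ∀ m : ℕ, (2:ℝ≥0∞) ^ (-(c * ((m:ℝ) - 1))) =
        (2:ℝ≥0∞) ^ c * ((2:ℝ≥0∞) ^ (-c)) ^ m := by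
      intro m
      rw [← ENNReal.rpow_natCast ((2:ℝ≥0∞) ^ (-c)) m, ← ENNReal.rpow_mul,
        ← ENNReal.rpow_add _ _ h2z h2t]
      ring_nf
    rw [tsum_congr hrw, ENNReal.tsum_mul_left, ENNReal.tsum_geometric]
    apply ENNReal.mul_ne_top (ENNReal.rpow_ne_top_of_nonneg hc.le h2t)
    rw [Ne, ENNReal.inv_eq_top, tsub_eq_zero_iff_le]
    exact hr.not_ge
  have hCne : C ≠ ⊤ := hgeom ε hεpos
  -- the pointwise bound
  have hbound : ∀ (K : ℕ) (k : Fin J → ℕ),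
      (if (∀ j, 1 ≤ k j) ∧ (∃ j, (2 : ℝ) ^ (K : ℝ) ≤ (2 : ℝ) ^ (k j : ℝ)) then
          (∑ j, (2 : ℝ≥0∞) ^ (f (k j : ℝ))) / (∑ j, (2 : ℝ≥0∞) ^ (g (k j : ℝ)))
        else 0)
      ≤ (J : ℝ≥0∞) * (2:ℝ≥0∞) ^ (-(δ/2 * ((K:ℝ) - 1))) * ∏ j, a (k j) := by
    intro K k
    split_ifs with hcond
    · obtain ⟨hk1, j₁, hj₁⟩ := hcond
      have hKj : (K:ℝ) ≤ (k j₁ : ℝ) := (Real.rpow_le_rpow_left_iff one_lt_two).mp hj₁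
      obtain ⟨j₀, -, hmax⟩ := Finset.exists_max_image Finset.univ k ⟨⟨0, hJ⟩, Finset.mem_univ _⟩
      have hmax' : ∀ j, k j ≤ k j₀ := fun j => hmax j (Finset.mem_univ j)
      set M : ℝ := (k j₀ : ℝ) with hMdef
      have hM1 : (1:ℝ) ≤ M := by rw [hMdef]; exact_mod_cast hk1 j₀
      have hKM : (K:ℝ) ≤ M := le_trans hKj (by rw [hMdef]; exact_mod_cast hmax' j₁)
      have hk1' : ∀ j, (1:ℝ) ≤ (k j : ℝ) := fun j => by exact_mod_cast hk1 j
      have hkM : ∀ j, (k j : ℝ) ≤ M := fun j => by rw [hMdef]; exact_mod_cast hmax' j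
      -- exponent inequality
      have hsum : ∑ j : Fin J, ((k j : ℝ) - 1) ≤ (J:ℝ) * (M - 1) := by
        calc ∑ j : Fin J, ((k j : ℝ) - 1) ≤ ∑ _j : Fin J, (M - 1) :=
              Finset.sum_le_sum (fun j _ => by linarith [hkM j])
          _ = (J:ℝ) * (M - 1) := by
              rw [Finset.sum_const, Finset.card_univ, Fintype.card_fin, nsmul_eq_mul]
      have eineq : f M - g M ≤ -(δ/2 * ((K:ℝ) - 1)) + ∑ j : Fin J, -(ε * ((k j : ℝ) - 1)) := by
        have h0 := key M hM1
        have h2 : ε * ∑ j : Fin J, ((k j:ℝ) - 1) ≤ δ/2 * (M - 1) := by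
          calc ε * ∑ j : Fin J, ((k j:ℝ) - 1) ≤ ε * ((J:ℝ) * (M - 1)) :=
                mul_le_mul_of_nonneg_left hsum hεpos.le
            _ = δ/2 * (M - 1) := by rw [← mul_assoc, hεJ]
        have h3 : δ/2 * ((K:ℝ) - 1) ≤ δ/2 * (M - 1) :=
          mul_le_mul_of_nonneg_left (by linarith) (by linarith)
        have h4 : ∑ j : Fin J, -(ε * ((k j : ℝ) - 1)) = -(ε * ∑ j : Fin J, ((k j:ℝ) - 1)) := by
          rw [Finset.mul_sum]
          exact Finset.sum_neg_distrib _
        rw [h4]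
        linarith
      -- ENNReal chain
      have hnum : ∑ j, (2:ℝ≥0∞) ^ (f (k j : ℝ)) ≤ (J:ℝ≥0∞) * (2:ℝ≥0∞) ^ (f M) := by
        calc ∑ j, (2:ℝ≥0∞) ^ (f (k j : ℝ)) ≤ ∑ _j : Fin J, (2:ℝ≥0∞) ^ (f M) :=
              Finset.sum_le_sum (fun j _ =>
                ENNReal.rpow_le_rpow_of_exponent_le one_le_two
                  (hfm (hk1' j) hM1 (hkM j)))
          _ = (J:ℝ≥0∞) * (2:ℝ≥0∞) ^ (f M) := by
              rw [Finset.sum_const, Finset.card_univ, Fintype.card_fin, nsmul_eq_mul]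
      have hden : (2:ℝ≥0∞) ^ (g M) ≤ ∑ j, (2:ℝ≥0∞) ^ (g (k j : ℝ)) := by
        have := Finset.single_le_sum (f := fun j : Fin J => (2:ℝ≥0∞) ^ (g (k j : ℝ)))
          (fun j _ => zero_le) (Finset.mem_univ j₀)
        simpa [hMdef] using this
      calc (∑ j, (2 : ℝ≥0∞) ^ (f (k j : ℝ))) / (∑ j, (2 : ℝ≥0∞) ^ (g (k j : ℝ)))
          ≤ ((J:ℝ≥0∞) * (2:ℝ≥0∞) ^ (f M)) / (2:ℝ≥0∞) ^ (g M) :=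
            ENNReal.div_le_div hnum hden
        _ = (J:ℝ≥0∞) * (2:ℝ≥0∞) ^ (f M - g M) := by
            rw [mul_div_assoc, sub_eq_add_neg, ENNReal.rpow_add _ _ h2z h2t,
              ENNReal.rpow_neg, ← div_eq_mul_inv]
        _ ≤ (J:ℝ≥0∞) * (2:ℝ≥0∞) ^ (-(δ/2 * ((K:ℝ) - 1)) + ∑ j : Fin J, -(ε * ((k j : ℝ) - 1))) :=
            mul_le_mul_right (ENNReal.rpow_le_rpow_of_exponent_le one_le_two eineq) _
        _ = (J : ℝ≥0∞) * (2:ℝ≥0∞) ^ (-(δ/2 * ((K:ℝ) - 1))) * ∏ j, a (k j) := by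
            rw [ENNReal.rpow_add _ _ h2z h2t, rpow_finset_sum _ h2z h2t, mul_assoc]
    · exact zero_le
  -- bound the whole sum
  have htsum : ∀ K : ℕ,
      (∑' k : Fin J → ℕ,
        if (∀ j, 1 ≤ k j) ∧ (∃ j, (2 : ℝ) ^ (K : ℝ) ≤ (2 : ℝ) ^ (k j : ℝ)) then
          (∑ j, (2 : ℝ≥0∞) ^ (f (k j : ℝ))) / (∑ j, (2 : ℝ≥0∞) ^ (g (k j : ℝ)))
        else 0)
      ≤ ((J : ℝ≥0∞) * C ^ J * (2:ℝ≥0∞) ^ (δ/2)) * ((2:ℝ≥0∞) ^ (-(δ/2))) ^ K := by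
    intro K
    calc _ ≤ ∑' k : Fin J → ℕ,
          (J : ℝ≥0∞) * (2:ℝ≥0∞) ^ (-(δ/2 * ((K:ℝ) - 1))) * ∏ j, a (k j) :=
          ENNReal.tsum_le_tsum (fun k => hbound K k)
      _ = (J : ℝ≥0∞) * (2:ℝ≥0∞) ^ (-(δ/2 * ((K:ℝ) - 1))) * C ^ J := by
          rw [ENNReal.tsum_mul_left, tsum_pi_prod]
      _ = ((J : ℝ≥0∞) * C ^ J * (2:ℝ≥0∞) ^ (δ/2)) * ((2:ℝ≥0∞) ^ (-(δ/2))) ^ K := by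
          rw [← ENNReal.rpow_natCast ((2:ℝ≥0∞) ^ (-(δ/2))) K, ← ENNReal.rpow_mul]
          rw [show -(δ/2 * ((K:ℝ) - 1)) = δ/2 + -(δ/2) * (K:ℝ) by ring,
            ENNReal.rpow_add _ _ h2z h2t]
          ring
  -- the upper bound tends to zero
  have hr1 : (2:ℝ≥0∞) ^ (-(δ/2)) < 1 :=
    ENNReal.rpow_lt_one_of_one_lt_of_neg ENNReal.one_lt_two (by linarith)
  have hDne : (J : ℝ≥0∞) * C ^ J * (2:ℝ≥0∞) ^ (δ/2) ≠ ⊤ :=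
    ENNReal.mul_ne_top (ENNReal.mul_ne_top (ENNReal.natCast_ne_top J)
      (ENNReal.pow_ne_top hCne)) (ENNReal.rpow_ne_top_of_nonneg (by linarith) h2t)
  have hupper : Tendsto (fun K : ℕ =>
      ((J : ℝ≥0∞) * C ^ J * (2:ℝ≥0∞) ^ (δ/2)) * ((2:ℝ≥0∞) ^ (-(δ/2))) ^ K) atTop (nhds 0) := by
    have := ENNReal.Tendsto.const_mul
      (ENNReal.tendsto_pow_atTop_nhds_zero_of_lt_one hr1) (Or.inr hDne)
    simpa using this
  exact tendsto_of_tendsto_of_tendsto_of_le_of_le tendsto_const_nhds hupper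
    (fun K => zero_le) htsum
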